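/- Let U ⊆ ℂ be open, let φ₁, φ₃ : U → ℂ be holomorphic with primitives h₁, h₃, and define x(u+iv) = (Re h₁, −Im h₁, Re h₃). At every z₀ ∈ U with φ₁(z₀) ≠ 0, the third component of x_u × x_v equals −|φ₁(z₀)|² ≠ 0, and the second fundamental form coefficients with respect to the minimal normal satisfy h₁₁ = Re[φ₁(φ₃/φ₁)'](z₀), h₁₂ = −Im[φ₁(φ₃/φ₁)'](z₀), and h₂₂ = −h₁₁, where φ₁(φ₃/φ₁)' = φ₃' − φ₃φ₁'/φ₁. -/

import Mathlib

noncomputable section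

/-- Partial derivative of a map on ℂ ≅ ℝ² in the u-direction (real direction 1). -/
def du {E : Type*} [NormedAddCommGroup E] [NormedSpace ℝ E]
    (f : ℂ → E) : ℂ → E := fun z => fderiv ℝ f z 1

/-- Partial derivative of a map on ℂ ≅ ℝ² in the v-direction (direction i). -/
def dv {E : Type*} [NormedAddCommGroup E] [NormedSpace ℝ E]
    (f : ℂ → E) : ℂ → E := fun z => fderiv ℝ f z Complex.I

/-- The degenerate simply isotropic inner product on ℝ³: ⟨u,v⟩ = u₁v₁ + u₂v₂. -/
def isoInner (a b : ℝ × ℝ × ℝ) : ℝ := a.1 * b.1 + a.2.1 * b.2.1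

/-- The Euclidean dot product on ℝ³. -/
def dot3 (a b : ℝ × ℝ × ℝ) : ℝ := a.1 * b.1 + a.2.1 * b.2.1 + a.2.2 * b.2.2

/-- The Euclidean cross product on ℝ³. -/
def cross3 (a b : ℝ × ℝ × ℝ) : ℝ × ℝ × ℝ :=
  (a.2.1 * b.2.2 - a.2.2 * b.2.1, a.2.2 * b.1 - a.1 * b.2.2, a.1 * b.2.1 - a.2.1 * b.1)

/-- First fundamental form coefficients (isotropic metric) of x : ℂ → ℝ³. -/
def g11 (x : ℂ → ℝ × ℝ × ℝ) (z : ℂ) : ℝ := isoInner (du x z) (du x z)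
def g12 (x : ℂ → ℝ × ℝ × ℝ) (z : ℂ) : ℝ := isoInner (du x z) (dv x z)
def g22 (x : ℂ → ℝ × ℝ × ℝ) (z : ℂ) : ℝ := isoInner (dv x z) (dv x z)

/-- The minimal normal: the unique vector of the form (n₁,n₂,1) Euclidean-orthogonal to
x_u and x_v (obtained by normalizing the cross product so its third component is 1). -/
def Nm (x : ℂ → ℝ × ℝ × ℝ) (z : ℂ) : ℝ × ℝ × ℝ :=
  ((cross3 (du x z) (dv x z)).1 / (cross3 (du x z) (dv x z)).2.2,
   (cross3 (du x z) (dv x z)).2.1 / (cross3 (du x z) (dv x z)).2.2, 1)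

/-- Second fundamental form coefficients with respect to the minimal normal. -/
def h11 (x : ℂ → ℝ × ℝ × ℝ) (z : ℂ) : ℝ := dot3 (du (du x) z) (Nm x z)
def h12 (x : ℂ → ℝ × ℝ × ℝ) (z : ℂ) : ℝ := dot3 (du (dv x) z) (Nm x z)
def h22 (x : ℂ → ℝ × ℝ × ℝ) (z : ℂ) : ℝ := dot3 (dv (dv x) z) (Nm x z)

/-- The isotropic Gaussian curvature. -/
def Kcurv (x : ℂ → ℝ × ℝ × ℝ) (z : ℂ) : ℝ :=
  (h11 x z * h22 x z - (h12 x z) ^ 2) / (g11 x z * g22 x z - (g12 x z) ^ 2)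

/-- The isotropic mean curvature. -/
def meanH (x : ℂ → ℝ × ℝ × ℝ) (z : ℂ) : ℝ :=
  (g11 x z * h22 x z - 2 * g12 x z * h12 x z + g22 x z * h11 x z) /
    (2 * (g11 x z * g22 x z - (g12 x z) ^ 2))

/-- For the Weierstrass map x = (Re h₁, −Im h₁, Re h₃) built from the holomorphic curve
φ = (φ₁, iφ₁, φ₃), at every z₀ with φ₁(z₀) ≠ 0 the third component of x_u × x_v equals
−|φ₁(z₀)|² ≠ 0, and the second fundamental form coefficients with respect to the minimal
normal satisfy h₁₁ = Re[φ₁(φ₃/φ₁)'], h₁₂ = −Im[φ₁(φ₃/φ₁)'] and h₂₂ = −h₁₁ at z₀, where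
φ₁(φ₃/φ₁)' = φ₃' − φ₃φ₁'/φ₁. -/
def Lmap (c₁ c₃ : ℂ) : ℂ →L[ℝ] ℝ × ℝ × ℝ :=
  (Complex.reCLM.comp ((ContinuousLinearMap.smulRight (1 : ℂ →L[ℂ] ℂ) c₁).restrictScalars ℝ)).prod
    ((-(Complex.imCLM.comp ((ContinuousLinearMap.smulRight (1 : ℂ →L[ℂ] ℂ) c₁).restrictScalars ℝ))).prod
      (Complex.reCLM.comp ((ContinuousLinearMap.smulRight (1 : ℂ →L[ℂ] ℂ) c₃).restrictScalars ℝ)))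

lemma Lmap_apply (c₁ c₃ d : ℂ) : Lmap c₁ c₃ d = ((d*c₁).re, -(d*c₁).im, (d*c₃).re) := by
  simp [Lmap, smul_eq_mul]

lemma hasFDerivAt_weier (f g : ℂ → ℂ) (c₁ c₃ : ℂ) (z : ℂ)
    (hf : HasDerivAt f c₁ z) (hg : HasDerivAt g c₃ z) :
    HasFDerivAt (fun w => ((f w).re, -(f w).im, (g w).re)) (Lmap c₁ c₃) z := by
  have hf' := hf.hasFDerivAt.restrictScalars ℝ
  have hg' := hg.hasFDerivAt.restrictScalars ℝ
  exact HasFDerivAt.prodMk (Complex.reCLM.hasFDerivAt.comp z hf')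
    (HasFDerivAt.prodMk ((Complex.imCLM.hasFDerivAt.comp z hf').neg) (Complex.reCLM.hasFDerivAt.comp z hg'))

theorem stmt10 (U : Set ℂ) (hU : IsOpen U) (φ₁ φ₃ h₁ h₃ : ℂ → ℂ)
    (hφ₁ : DifferentiableOn ℂ φ₁ U) (hφ₃ : DifferentiableOn ℂ φ₃ U)
    (hh₁ : ∀ z ∈ U, HasDerivAt h₁ (φ₁ z) z)
    (hh₃ : ∀ z ∈ U, HasDerivAt h₃ (φ₃ z) z) :
    ∀ z₀ ∈ U, φ₁ z₀ ≠ 0 →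
      (cross3 (du (fun w => ((h₁ w).re, -(h₁ w).im, (h₃ w).re)) z₀)
          (dv (fun w => ((h₁ w).re, -(h₁ w).im, (h₃ w).re)) z₀)).2.2 =
        -(‖φ₁ z₀‖ ^ 2) ∧
      -(‖φ₁ z₀‖ ^ 2) ≠ 0 ∧
      h11 (fun w => ((h₁ w).re, -(h₁ w).im, (h₃ w).re)) z₀ =
        (deriv φ₃ z₀ - φ₃ z₀ * deriv φ₁ z₀ / φ₁ z₀).re ∧
      h12 (fun w => ((h₁ w).re, -(h₁ w).im, (h₃ w).re)) z₀ =
        -(deriv φ₃ z₀ - φ₃ z₀ * deriv φ₁ z₀ / φ₁ z₀).im ∧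
      h22 (fun w => ((h₁ w).re, -(h₁ w).im, (h₃ w).re)) z₀ =
        -h11 (fun w => ((h₁ w).re, -(h₁ w).im, (h₃ w).re)) z₀ := by

  intro z₀ hz hc
  set x : ℂ → ℝ × ℝ × ℝ := fun w => ((h₁ w).re, -(h₁ w).im, (h₃ w).re) with hxdef
  have hU' : U ∈ nhds z₀ := hU.mem_nhds hz
  have ha₁ : HasDerivAt φ₁ (deriv φ₁ z₀) z₀ :=
    ((hφ₁.differentiableAt hU').hasDerivAt)
  have ha₃ : HasDerivAt φ₃ (deriv φ₃ z₀) z₀ :=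
    ((hφ₃.differentiableAt hU').hasDerivAt)
  set a₁ := deriv φ₁ z₀
  set a₃ := deriv φ₃ z₀
  set c₁ := φ₁ z₀
  set c₃ := φ₃ z₀
  -- first derivatives on U
  have hdux : ∀ w ∈ U, du x w = ((φ₁ w).re, -(φ₁ w).im, (φ₃ w).re) := by
    intro w hw
    have := (hasFDerivAt_weier h₁ h₃ (φ₁ w) (φ₃ w) w (hh₁ w hw) (hh₃ w hw)).fderiv
    simp only [du, hxdef, this, Lmap_apply, one_mul]
  have hdvx : ∀ w ∈ U, dv x w =
      ((Complex.I * φ₁ w).re, -(Complex.I * φ₁ w).im, (Complex.I * φ₃ w).re) := by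
    intro w hw
    have := (hasFDerivAt_weier h₁ h₃ (φ₁ w) (φ₃ w) w (hh₁ w hw) (hh₃ w hw)).fderiv
    simp only [dv, hxdef, this, Lmap_apply]
  -- second derivatives at z₀
  have hEq1 : du x =ᶠ[nhds z₀] fun w => ((φ₁ w).re, -(φ₁ w).im, (φ₃ w).re) :=
    Filter.eventuallyEq_of_mem hU' hdux
  have hEq2 : dv x =ᶠ[nhds z₀]
      fun w => ((Complex.I * φ₁ w).re, -(Complex.I * φ₁ w).im, (Complex.I * φ₃ w).re) :=
    Filter.eventuallyEq_of_mem hU' hdvx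
  have hF1 : fderiv ℝ (du x) z₀ = Lmap a₁ a₃ := by
    rw [hEq1.fderiv_eq]
    exact (hasFDerivAt_weier φ₁ φ₃ a₁ a₃ z₀ ha₁ ha₃).fderiv
  have hF2 : fderiv ℝ (dv x) z₀ = Lmap (Complex.I * a₁) (Complex.I * a₃) := by
    rw [hEq2.fderiv_eq]
    exact (hasFDerivAt_weier _ _ _ _ z₀ (ha₁.const_mul Complex.I)
      (ha₃.const_mul Complex.I)).fderiv
  have hduu : du (du x) z₀ = (a₁.re, -a₁.im, a₃.re) := by
    simp only [du, hF1, Lmap_apply, one_mul]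
  have hduv : du (dv x) z₀ = (-a₁.im, -a₁.re, -a₃.im) := by
    simp only [du, hF2, Lmap_apply, one_mul]
    simp [Complex.mul_re, Complex.mul_im]
  have hdvv : dv (dv x) z₀ = (-a₁.re, a₁.im, -a₃.re) := by
    simp only [dv, hF2, Lmap_apply]
    simp only [Complex.mul_re, Complex.mul_im, Complex.I_re, Complex.I_im, Prod.mk.injEq]
    refine ⟨by ring, by ring, by ring⟩
  have hduz : du x z₀ = (c₁.re, -c₁.im, c₃.re) := hdux z₀ hz
  have hdvz : dv x z₀ = (-c₁.im, -c₁.re, -c₃.im) := by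
    rw [hdvx z₀ hz]
    simp [Complex.mul_re, Complex.mul_im]
    exact ⟨rfl, rfl, rfl⟩
  have hden : c₁.re * c₁.re + c₁.im * c₁.im ≠ 0 := by
    have := Complex.normSq_pos.mpr hc
    rw [Complex.normSq_apply] at this
    exact ne_of_gt this
  have hd2 : -c₁.im ^ 2 - c₁.re ^ 2 ≠ 0 := by
    intro h
    apply hden
    nlinarith [sq_nonneg c₁.re, sq_nonneg c₁.im]
  have hcross : cross3 (du x z₀) (dv x z₀) =
      (c₁.im * c₃.im + c₁.re * c₃.re, c₁.re * c₃.im - c₁.im * c₃.re,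
        -(c₁.re * c₁.re + c₁.im * c₁.im)) := by
    rw [hduz, hdvz]
    simp only [cross3, Prod.mk.injEq]
    refine ⟨by ring, by ring, by ring⟩
  have habs : ‖c₁‖ ^ 2 = c₁.re * c₁.re + c₁.im * c₁.im := by
    rw [Complex.sq_norm, Complex.normSq_apply]
  clear_value a₁ a₃ c₁ c₃
  refine ⟨by rw [hcross, habs], by rw [habs]; exact neg_ne_zero.mpr hden, ?_, ?_, ?_⟩
  · rw [h11, Nm, hcross, hduu]
    simp only [dot3, Complex.sub_re, Complex.div_re, Complex.mul_re, Complex.mul_im,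
      Complex.normSq_apply]
    rw [show (-(c₁.re * c₁.re + c₁.im * c₁.im)) = (-c₁.im ^ 2 - c₁.re ^ 2) by ring] at *
    generalize hq : (-c₁.im ^ 2 - c₁.re ^ 2) = Dn at hd2 ⊢
    field_simp [hd2]
    rw [← hq]
    have hd3 : c₁.im ^ 2 + c₁.re ^ 2 ≠ 0 := by intro h; apply hden; nlinarith
    ring_nf
    field_simp
    ring
  · rw [h12, Nm, hcross, hduv]
    simp only [dot3, Complex.sub_im, Complex.div_im, Complex.mul_re, Complex.mul_im,
      Complex.normSq_apply]
    rw [show (-(c₁.re * c₁.re + c₁.im * c₁.im)) = (-c₁.im ^ 2 - c₁.re ^ 2) by ring] at *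
    generalize hq : (-c₁.im ^ 2 - c₁.re ^ 2) = Dn at hd2 ⊢
    field_simp [hd2]
    rw [← hq]
    have hd3 : c₁.im ^ 2 + c₁.re ^ 2 ≠ 0 := by intro h; apply hden; nlinarith
    ring_nf
    field_simp
    ring
  · rw [h22, h11, Nm, hcross, hdvv, hduu]
    simp only [dot3]
    field_simp
    ring
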